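/- Every symmetric reflection space E of an abelian group G is a union of cosets of 2⟨E⟩: E = ⋃_{e ∈ E} (2⟨E⟩ + e), i.e., for every e ∈ E, the whole coset 2⟨E⟩ + e is contained in E. -/

import Mathlib

theorem symmetric_reflection_space_union_cosets {G : Type*} [AddCommGroup G] (E : Set G)
    (hE : ∀ x ∈ E, ∀ y ∈ E, x - 2 • y ∈ E) :
    E = ⋃ e ∈ E, {g : G | ∃ s ∈ AddSubgroup.closure E, g = 2 • s + e} := by
  have key : ∀ s ∈ AddSubgroup.closure E, ∀ e ∈ E, e - 2 • s ∈ E ∧ e + 2 • s ∈ E := by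
    intro s hs
    induction hs using AddSubgroup.closure_induction with
    | mem x hx =>
      intro e he
      refine ⟨hE e he x hx, ?_⟩
      have hnx : -x ∈ E := by simpa [two_smul] using hE x hx x hx
      have h := hE e he (-x) hnx
      simpa [smul_neg, sub_neg_eq_add] using h
    | zero =>
      intro e he
      simpa using he
    | add s t hs ht ihs iht =>
      intro e he
      constructor
      · have h2 := (iht _ (ihs e he).1).1
        have : e - 2 • s - 2 • t = e - 2 • (s + t) := by
          rw [smul_add]; abel
        rwa [this] at h2
      · have h2 := (iht _ (ihs e he).2).2
        have : e + 2 • s + 2 • t = e + 2 • (s + t) := by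
          rw [smul_add]; abel
        rwa [this] at h2
    | neg s hs ih =>
      intro e he
      refine ⟨?_, ?_⟩
      · have := (ih e he).2
        rwa [smul_neg, sub_neg_eq_add]
      · have := (ih e he).1
        rwa [smul_neg, ← sub_eq_add_neg]
  ext g
  simp only [Set.mem_iUnion, Set.mem_setOf_eq]
  constructor
  · intro hg
    exact ⟨g, hg, 0, (AddSubgroup.closure E).zero_mem, by simp⟩
  · rintro ⟨e, he, s, hs, rfl⟩
    have := (key s hs e he).2
    rwa [add_comm]
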